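/- Let (Gᵢ, pᵢ) be an inverse sequence of countable groups and Hᵢ ≤ Gᵢ subgroups with pᵢ(Hᵢ₊₁) ⊆ Hᵢ for all i. If the inclusion-induced map of pointed sets lim¹ Hᵢ → lim¹ Gᵢ is surjective, then the induced inverse sequence of pointed coset spaces Gᵢ/Hᵢ (pointed at the coset Hᵢ) satisfies the Mittag-Leffler condition. -/
import Mathlib


/-- An inverse sequence of groups `⋯ → G₂ → G₁ → G₀`, presented by its compatible
composite bonding homomorphisms `bond h : G j →* G i` for `i ≤ j`; the one-step
bonding maps `pᵢ` are `bond (Nat.le_succ i) : G (i+1) →* G i`. -/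
structure GroupInvSeq (G : ℕ → Type) [∀ i, Group (G i)] : Type where
  bond : ∀ ⦃i j : ℕ⦄, i ≤ j → (G j →* G i)
  bond_refl : ∀ i, bond (le_refl i) = MonoidHom.id (G i)
  bond_comp : ∀ ⦃i j k : ℕ⦄ (hij : i ≤ j) (hjk : j ≤ k),
    (bond hij).comp (bond hjk) = bond (hij.trans hjk)

namespace GroupInvSeq

variable {G : ℕ → Type} [∀ i, Group (G i)]

/-- The orbit relation on `∏ᵢ Gᵢ` of the right action
`(g₀,g₁,…)·(x₀,x₁,…) = (x₀⁻¹g₀p₀(x₁), x₁⁻¹g₁p₁(x₂), …)`; its orbit set is `lim¹`. -/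
def lim1Rel (S : GroupInvSeq G) (g g' : ∀ i, G i) : Prop :=
  ∃ x : ∀ i, G i, ∀ i, g' i = (x i)⁻¹ * g i * S.bond (Nat.le_succ i) (x (i + 1))

/-- The derived limit `lim¹` of an inverse sequence of groups: the orbit set of the
action above, pointed at the class of the identity. -/
def lim1 (S : GroupInvSeq G) : Type :=
  Quot S.lim1Rel

/-- The corresponding orbit relation for the inverse sequence of subgroups
`Hᵢ ≤ Gᵢ` (with the restricted bonding maps); its orbit set is `lim¹ Hᵢ`. -/
def lim1RelSub (S : GroupInvSeq G) (H : ∀ i, Subgroup (G i))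
    (h h' : ∀ i, ↥(H i)) : Prop :=
  ∃ x : ∀ i, ↥(H i), ∀ i,
    (h' i : G i) = (x i : G i)⁻¹ * (h i : G i) *
      S.bond (Nat.le_succ i) (x (i + 1) : G (i + 1))

/-- The map `lim¹ Hᵢ → lim¹ Gᵢ` induced by the inclusions `Hᵢ ↪ Gᵢ`, sending the
class of `(h₀,h₁,…)` to its class in `lim¹ Gᵢ`. -/
def lim1incl (S : GroupInvSeq G) (H : ∀ i, Subgroup (G i)) :
    Quot (S.lim1RelSub H) → S.lim1 :=
  Quot.lift (fun h => Quot.mk S.lim1Rel fun i => (h i : G i))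
    (fun h h' hr => by
      obtain ⟨x, hx⟩ := hr
      exact Quot.sound ⟨fun i => (x i : G i), fun i => hx i⟩)

end GroupInvSeq

namespace GroupInvSeq

variable {G : ℕ → Type} [∀ i, Group (G i)]

lemma bond_bond (S : GroupInvSeq G) {i j k : ℕ} (hij : i ≤ j) (hjk : j ≤ k) (g : G k) :
    S.bond hij (S.bond hjk g) = S.bond (hij.trans hjk) g := by
  rw [← S.bond_comp hij hjk]; rfl

lemma bond_refl_apply (S : GroupInvSeq G) {i : ℕ} (h : i ≤ i) (a : G i) :
    S.bond h a = a := by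
  rw [S.bond_refl i]; rfl

lemma lim1Rel_equivalence (S : GroupInvSeq G) : Equivalence S.lim1Rel := by
  constructor
  · intro g; exact ⟨fun _ => 1, fun i => by simp⟩
  · rintro g g' ⟨x, hx⟩
    refine ⟨fun i => (x i)⁻¹, fun i => ?_⟩
    rw [hx i]; simp [map_inv]; group
  · rintro g g' g'' ⟨x, hx⟩ ⟨y, hy⟩
    refine ⟨fun i => x i * y i, fun i => ?_⟩
    rw [hy i, hx i]; simp [map_mul]; group

lemma bond_mem (S : GroupInvSeq G) (H : ∀ i, Subgroup (G i))
    (hH : ∀ i, ∀ x ∈ H (i + 1), S.bond (Nat.le_succ i) x ∈ H i)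
    {i m : ℕ} (hm : i ≤ m) {a : G m} (ha : a ∈ H m) : S.bond hm a ∈ H i := by
  induction m, hm using Nat.le_induction with
  | base => rwa [bond_refl_apply]
  | succ m hm ih =>
      rw [← bond_bond S hm (Nat.le_succ m)]
      exact ih (hH m a ha)

end GroupInvSeq


open GroupInvSeq in
/-- For an inverse sequence of countable groups `Gᵢ` with compatible subgroups
`Hᵢ ≤ Gᵢ`: if the inclusion-induced map `lim¹ Hᵢ → lim¹ Gᵢ` is surjective, then the
induced inverse sequence of pointed coset spaces `Gᵢ/Hᵢ` satisfies the Mittag-Leffler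
condition. -/
theorem coset_mittagLeffler_of_lim1incl_surjective
    {G : ℕ → Type} [∀ i, Group (G i)] [∀ i, Countable (G i)]
    (S : GroupInvSeq G) (H : ∀ i, Subgroup (G i))
    (hH : ∀ i, ∀ x ∈ H (i + 1), S.bond (Nat.le_succ i) x ∈ H i)
    (hsurj : Function.Surjective (lim1incl S H)) :
    ∀ i, ∃ j, ∃ hij : i < j, ∀ k, ∀ hjk : j < k,
      Set.range (fun g : G k =>
        (QuotientGroup.mk (S.bond (hij.le.trans hjk.le) g) : G i ⧸ H i)) =
      Set.range (fun g : G j =>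
        (QuotientGroup.mk (S.bond hij.le g) : G i ⧸ H i)) := by
  intro i
  by_contra hc
  push_neg at hc
  classical
  -- range monotonicity
  have rsub : ∀ (j k : ℕ) (hij : i ≤ j) (hjk : j ≤ k),
      Set.range (fun g : G k => (QuotientGroup.mk (S.bond (hij.trans hjk) g) : G i ⧸ H i)) ⊆
      Set.range (fun g : G j => (QuotientGroup.mk (S.bond hij g) : G i ⧸ H i)) := by
    rintro j k hij hjk y ⟨g, rfl⟩
    refine ⟨S.bond hjk g, ?_⟩
    show (QuotientGroup.mk (S.bond hij (S.bond hjk g)) : G i ⧸ H i) = _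
    rw [bond_bond]
  -- one diagonalization step
  have step : ∀ (j : ℕ) (w t : G i), ∃ k, ∃ hk : j < k, ∃ p : G i,
      ∀ hj : i < j,
        (∃ g : G j, S.bond hj.le g = p) ∧
        ¬ ∃ g : G k, (S.bond (hj.trans hk).le g)⁻¹ * ((w * p)⁻¹ * t) ∈ H i := by
    intro j w t
    by_cases hj : i < j
    · by_cases hQ : ∃ g : G j, (S.bond hj.le g)⁻¹ * (w⁻¹ * t) ∈ H i
      · obtain ⟨γ, hγ⟩ := hQ
        obtain ⟨k, hk, hne⟩ := hc j hj
        obtain ⟨y, hyj, hyk⟩ :=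
          Set.exists_of_ssubset ((rsub j k hj.le hk.le).ssubset_of_ne hne)
        obtain ⟨δ, rfl⟩ := hyj
        refine ⟨k, hk, S.bond hj.le (γ * δ⁻¹), fun hj' => ⟨⟨γ * δ⁻¹, rfl⟩, ?_⟩⟩
        rintro ⟨g, hg⟩
        apply hyk
        refine ⟨g, ?_⟩
        show (QuotientGroup.mk _ : G i ⧸ H i) = QuotientGroup.mk _
        rw [QuotientGroup.eq]
        have key : (S.bond (hj.trans hk).le g)⁻¹ * S.bond hj.le δ =
            (S.bond (hj'.trans hk).le g)⁻¹ * ((w * S.bond hj.le (γ * δ⁻¹))⁻¹ * t) *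
            ((S.bond hj.le γ)⁻¹ * (w⁻¹ * t))⁻¹ := by
          simp only [map_mul, map_inv]
          group
        rw [key]
        exact mul_mem hg (inv_mem hγ)
      · refine ⟨j + 1, Nat.lt_succ_self j, 1, fun hj' => ⟨⟨1, map_one _⟩, ?_⟩⟩
        rintro ⟨g, hg⟩
        apply hQ
        refine ⟨S.bond (Nat.le_succ j) g, ?_⟩
        rw [bond_bond]
        simpa using hg
    · exact ⟨j + 1, Nat.lt_succ_self j, 1, fun hj' => absurd hj' hj⟩
  choose k hkk q hq using step
  obtain ⟨e, he⟩ := exists_surjective_nat (G i)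
  -- the recursively defined sequence of (level, partial product)
  let seq : ℕ → ℕ × G i := fun n =>
    Nat.rec (i + 1, 1) (fun n s => (k s.1 s.2 (e n), s.2 * q s.1 s.2 (e n))) n
  have seqS : ∀ n, seq (n + 1) =
      (k (seq n).1 (seq n).2 (e n), (seq n).2 * q (seq n).1 (seq n).2 (e n)) :=
    fun n => rfl
  have hlt : ∀ n, i < (seq n).1 := by
    intro n
    induction n with
    | zero => exact Nat.lt_succ_self i
    | succ n ih => exact ih.trans (hkk _ _ _)
  have hmono : StrictMono (fun n => (seq n).1) :=
    strictMono_nat_of_lt_succ (fun n => hkk _ _ _)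
  -- u m : the element placed at level m (in G i)
  let u : ℕ → G i := fun m =>
    if h : ∃ n, (seq n).1 = m then q (seq h.choose).1 (seq h.choose).2 (e h.choose) else 1
  have hu1 : ∀ n, u ((seq n).1) = q (seq n).1 (seq n).2 (e n) := by
    intro n
    have h : ∃ n', (seq n').1 = (seq n).1 := ⟨n, rfl⟩
    have hcn : h.choose = n := hmono.injective h.choose_spec
    simp only [u, dif_pos h, hcn]
  have hu2 : ∀ m, (∀ n, (seq n).1 ≠ m) → u m = 1 := by
    intro m hm
    simp only [u, dif_neg (fun h : ∃ n, (seq n).1 = m => hm h.choose h.choose_spec)]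
  -- partial products W
  let W : ℕ → G i := fun m => Nat.rec 1 (fun m w => w * u m) m
  have WS : ∀ m, W (m + 1) = W m * u m := fun _ => rfl
  have hWsmall : ∀ m, m ≤ i + 1 → W m = 1 := by
    intro m
    induction m with
    | zero => intro _; rfl
    | succ m ih =>
      intro hm
      have hum : u m = 1 := by
        refine hu2 m (fun n hn => ?_)
        have := hlt n
        omega
      rw [WS, ih (by omega), hum, mul_one]
  have hW : ∀ n, W ((seq n).1) = (seq n).2 := by
    intro n
    induction n with
    | zero => exact hWsmall _ le_rfl
    | succ n ih =>
      have main : ∀ m, (seq n).1 < m → m ≤ (seq (n + 1)).1 → W m = (seq (n + 1)).2 := by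
        intro m
        induction m with
        | zero => omega
        | succ m ihm =>
          intro h1 h2
          rcases Nat.lt_or_ge (seq n).1 m with hcase | hcase
          · have hum : u m = 1 := by
              refine hu2 m (fun n' hn' => ?_)
              rcases le_or_gt n' n with h' | h'
              · have h5 : (seq n').1 ≤ (seq n).1 := hmono.monotone h'
                omega
              · have h5 : (seq (n + 1)).1 ≤ (seq n').1 :=
                  hmono.monotone (Nat.succ_le_of_lt h')
                omega
            rw [WS, ihm hcase (by omega), hum, mul_one]
          · have hm : m = (seq n).1 := by omega
            rw [WS, hm, ih, hu1 n, seqS n]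
      exact main _ (hmono (Nat.lt_succ_self n)) le_rfl
  -- preimages of u
  have hu : ∀ m (hm : i ≤ m), ∃ g : G m, S.bond hm g = u m := by
    intro m hm
    by_cases h : ∃ n, (seq n).1 = m
    · obtain ⟨n, rfl⟩ := h
      rw [hu1 n]
      exact (hq _ _ (e n) (hlt n)).1
    · rw [hu2 m (fun n hn => h ⟨n, hn⟩)]
      exact ⟨1, map_one _⟩
  let g : ∀ m, G m := fun m => if hm : i ≤ m then (hu m hm).choose else 1
  have hg : ∀ m (hm : i ≤ m), S.bond hm (g m) = u m := by
    intro m hm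
    simp only [g, dif_pos hm]
    exact (hu m hm).choose_spec
  -- use surjectivity
  obtain ⟨c, hcq⟩ := hsurj (Quot.mk _ g)
  obtain ⟨hs, rfl⟩ := Quot.exists_rep c
  have hcq' : Quot.mk S.lim1Rel (fun m => (hs m : G m)) = Quot.mk S.lim1Rel g := hcq
  have hrel : S.lim1Rel g (fun m => (hs m : G m)) :=
    (lim1Rel_equivalence S).symm
      (((lim1Rel_equivalence S).eqvGen_iff).mp (Quot.eq.mp hcq'))
  obtain ⟨x, hx⟩ := hrel
  -- hx : ∀ m, (hs m : G m) = (x m)⁻¹ * g m * S.bond _ (x (m+1))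
  have main : ∀ m (hm : i ≤ m), ∃ h' ∈ H i, S.bond hm (x m) = (W m)⁻¹ * x i * h' := by
    intro m hm
    induction m, hm using Nat.le_induction with
    | base =>
      refine ⟨1, one_mem _, ?_⟩
      rw [bond_refl_apply, hWsmall i (Nat.le_succ i)]
      group
    | succ m hm ih =>
      obtain ⟨h', h'mem, hxm⟩ := ih
      have hxm2 : (hs m : G m) = (x m)⁻¹ * g m * S.bond (Nat.le_succ m) (x (m + 1)) := hx m
      have hxs : S.bond (Nat.le_succ m) (x (m + 1)) = (g m)⁻¹ * x m * (hs m : G m) := by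
        rw [hxm2]; group
      have hb : S.bond (hm.trans (Nat.le_succ m)) (x (m + 1)) =
          S.bond hm (S.bond (Nat.le_succ m) (x (m + 1))) := (bond_bond S _ _ _).symm
      refine ⟨h' * S.bond hm (hs m : G m), mul_mem h'mem (bond_mem S H hH hm (hs m).2), ?_⟩
      rw [hb, hxs, map_mul, map_mul, map_inv, hg m hm, hxm, WS]
      group
  obtain ⟨n, hn⟩ := he (x i)
  obtain ⟨h', h'mem, hxm⟩ := main ((seq (n + 1)).1) (hlt (n + 1)).le
  have final : (S.bond (hlt (n + 1)).le (x ((seq (n + 1)).1)))⁻¹ *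
      (((seq n).2 * q (seq n).1 (seq n).2 (e n))⁻¹ * e n) ∈ H i := by
    have h2 : (seq n).2 * q (seq n).1 (seq n).2 (e n) = W ((seq (n + 1)).1) := by
      rw [hW (n + 1)]
    rw [h2, hn, hxm]
    have h3 : ((W ((seq (n + 1)).1))⁻¹ * x i * h')⁻¹ *
        ((W ((seq (n + 1)).1))⁻¹ * x i) = h'⁻¹ := by group
    rw [h3]
    exact inv_mem h'mem
  exact (hq (seq n).1 (seq n).2 (e n) (hlt n)).2 ⟨x ((seq (n + 1)).1), final⟩
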